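/- arXiv:0804.0396 — 15 statements merged into one kernel-verified Lean document; each statement's English description precedes it below -/
import Mathlib

section
/- The 3-CNF formula C is satisfiable if and only if there exists a selection σ : Fin m → Fin 3 such that for all clause indices i, i' : Fin m, the occurrences (i, σ i) and (i', σ i') are not contradictory. -/
/-- The 3-CNF formula `C` is satisfiable iff there exists a selection
`σ : Fin m → Fin 3` such that no two occurrences `(i, σ i)`, `(i', σ i')` are
contradictory. -/
theorem threeSat_iff_selection (n m : ℕ) (C : Fin m → Fin 3 → Fin n × Bool) :
    (∃ a : Fin n → Bool, ∀ i : Fin m, ∃ j : Fin 3, a (C i j).1 = (C i j).2) ↔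
    (∃ σ : Fin m → Fin 3, ∀ i i' : Fin m,
      ¬(((i, σ i) : Fin m × Fin 3) ≠ (i', σ i') ∧
        (C i (σ i)).1 = (C i' (σ i')).1 ∧
        (C i (σ i)).2 ≠ (C i' (σ i')).2)) := by
  constructor
  · rintro ⟨a, ha⟩
    choose σ hσ using ha
    refine ⟨σ, fun i i' ⟨_, hvar, hpol⟩ => ?_⟩
    apply hpol
    rw [← hσ i, ← hσ i', hvar]
  · rintro ⟨σ, hσ⟩
    refine ⟨fun v => decide (∃ i, (C i (σ i)).1 = v ∧ (C i (σ i)).2 = true),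
      fun i => ⟨σ i, ?_⟩⟩
    cases hb : (C i (σ i)).2 with
    | true => simp only [decide_eq_true_eq]; exact ⟨i, rfl, hb⟩
    | false =>
      simp only [decide_eq_false_iff_not]
      rintro ⟨i', hvar, htrue⟩
      exact hσ i' i ⟨by rintro h; have : i' = i := congrArg Prod.fst h; rw [this, hb] at htrue; exact Bool.noConfusion htrue,
        hvar, by rw [htrue, hb]; exact Bool.noConfusion⟩
end

section
/- The 3-CNF formula C is satisfiable if and only if there exists a finite set X of occurrences such that (a) for every clause index i : Fin m there is some j : Fin 3 with (i, j) ∈ X, and (b) no two occurrences belonging to X are contradictory. -/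
/-- The 3-CNF formula `C` is satisfiable iff there is a finite set `X` of
occurrences covering every clause and containing no contradictory pair. -/
theorem threeSat_iff_occurrenceSet (n m : ℕ) (C : Fin m → Fin 3 → Fin n × Bool) :
    (∃ a : Fin n → Bool, ∀ i : Fin m, ∃ j : Fin 3, a (C i j).1 = (C i j).2) ↔
    (∃ X : Finset (Fin m × Fin 3),
      (∀ i : Fin m, ∃ j : Fin 3, (i, j) ∈ X) ∧
      (∀ o ∈ X, ∀ o' ∈ X,
        ¬(o ≠ o' ∧ (C o.1 o.2).1 = (C o'.1 o'.2).1 ∧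
          (C o.1 o.2).2 ≠ (C o'.1 o'.2).2))) := by
  constructor
  · rintro ⟨a, ha⟩
    choose f hf using ha
    refine ⟨Finset.image (fun i => (i, f i)) Finset.univ, fun i => ⟨f i, ?_⟩, ?_⟩
    · simp
    · rintro o ho o' ho' ⟨-, hv, hb⟩
      simp only [Finset.mem_image, Finset.mem_univ, true_and] at ho ho'
      obtain ⟨i, rfl⟩ := ho
      obtain ⟨i', rfl⟩ := ho'
      exact hb (by rw [← hf i, ← hf i', hv])
  · rintro ⟨X, hcov, hnc⟩
    refine ⟨fun v => decide (∃ o ∈ X, (C o.1 o.2).1 = v ∧ (C o.1 o.2).2 = true), fun i => ?_⟩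
    obtain ⟨j, hj⟩ := hcov i
    refine ⟨j, ?_⟩
    cases hb : (C i j).2 with
    | true => simp only [decide_eq_true_eq]; exact ⟨(i, j), hj, rfl, hb⟩
    | false =>
      simp only [decide_eq_false_iff_not]
      rintro ⟨o, ho, hv, hb'⟩
      exact hnc o ho (i, j) hj ⟨by rintro rfl; rw [hb] at hb'; exact Bool.noConfusion hb',
        hv.symm ▸ rfl, by rw [hb, hb']; exact Bool.noConfusion⟩
end

section
/- Let an outer pair-instance (E, Φ, Γ, e₁, e₂) and an inner instance (E', Φ', Γ') be given, and let a : ℕ. If there exists X ∈ Φ such that for every S ∈ Γ it is not the case that both e₁ S ∈ X and e₂ S ∈ X, and there exists X' ∈ Φ' whose cost under every scenario of Γ' is at most a, then there exist X ∈ Φ and f : E → Φ' such that the cost of the product solution sol(X, f) under every scenario of the product instance is at most a. -/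
/-- An instance: a finite type of edges, a nonempty finite family of feasible solutions
(finsets of edges), and scenarios indexed by a finite type, each scenario being a cost
function from edges to ℕ. -/
structure Inst where
  E : Type
  [fintE : Fintype E]
  [decE : DecidableEq E]
  sols : Finset (Finset E)
  sols_nonempty : sols.Nonempty
  Scen : Type
  [fintScen : Fintype Scen]
  cost : Scen → E → ℕ

attribute [instance] Inst.fintE Inst.decE Inst.fintScen

/-- The cost of a solution `X` under scenario `S`. -/
def Inst.solCost (I : Inst) (X : Finset I.E) (S : I.Scen) : ℕ :=
  ∑ e ∈ X, I.cost S e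

/-- A pair-instance: scenarios are indexed by a finite type `Scen` equipped with maps
`e₁ e₂ : Scen → E` with `e₁ S ≠ e₂ S`; the scenario of `S` gives cost 1 to `e₁ S` and
`e₂ S` and cost 0 to every other edge. -/
structure PairInst where
  E : Type
  [fintE : Fintype E]
  [decE : DecidableEq E]
  sols : Finset (Finset E)
  sols_nonempty : sols.Nonempty
  Scen : Type
  [fintScen : Fintype Scen]
  e₁ : Scen → E
  e₂ : Scen → E
  ne : ∀ S, e₁ S ≠ e₂ S

attribute [instance] PairInst.fintE PairInst.decE PairInst.fintScen

/-- A pair-instance viewed as an instance, with the described 0/1 scenario costs. -/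
def PairInst.toInst (B : PairInst) : Inst where
  E := B.E
  sols := B.sols
  sols_nonempty := B.sols_nonempty
  Scen := B.Scen
  cost := fun S e => if e = B.e₁ S ∨ e = B.e₂ S then 1 else 0

/-- The product solution `sol(X, f) = {(e, x) | e ∈ X, x ∈ f e}`. -/
def PairInst.sol (B : PairInst) (I : Inst) (X : Finset B.E) (f : B.E → Finset I.E) :
    Finset (B.E × I.E) :=
  X.biUnion fun e => {e} ×ˢ f e

/-- The product of a pair-instance (outer) with an instance (inner). -/
def PairInst.prod (B : PairInst) (I : Inst) : Inst where
  E := B.E × I.E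
  sols := (B.sols ×ˢ Fintype.piFinset fun _ : B.E => I.sols).image
    fun p => B.sol I p.1 p.2
  sols_nonempty := by
    obtain ⟨X, hX⟩ := B.sols_nonempty
    obtain ⟨Y, hY⟩ := I.sols_nonempty
    have hf : (fun _ : B.E => Y) ∈ Fintype.piFinset fun _ : B.E => I.sols :=
      Fintype.mem_piFinset.mpr fun _ => hY
    exact Finset.Nonempty.image ⟨(X, fun _ => Y), Finset.mem_product.mpr ⟨hX, hf⟩⟩ _
  Scen := B.Scen × I.Scen × I.Scen
  cost := fun S p =>
    if p.1 = B.e₁ S.1 then I.cost S.2.1 p.2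
    else if p.1 = B.e₂ S.1 then I.cost S.2.2 p.2
    else 0

/-- The iterated construction: `I_0 = B` and `I_{t+1} = B.prod I_t`. -/
def PairInst.iter (B : PairInst) : ℕ → Inst
  | 0 => B.toInst
  | t + 1 => B.prod (B.iter t)

/-- If some `X ∈ Φ` never contains both `e₁ S` and `e₂ S`, and some
`X' ∈ Φ'` has cost at most `a` under every inner scenario, then some product solution
`sol(X, f)` has cost at most `a` under every scenario of the product instance. -/
theorem product_upper_bound (B : PairInst) (I : Inst) (a : ℕ)
    (h1 : ∃ X ∈ B.sols, ∀ S : B.Scen, ¬(B.e₁ S ∈ X ∧ B.e₂ S ∈ X))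
    (h2 : ∃ X' ∈ I.sols, ∀ S' : I.Scen, I.solCost X' S' ≤ a) :
    ∃ X ∈ B.sols, ∃ f : B.E → Finset I.E, (∀ e : B.E, f e ∈ I.sols) ∧
      ∀ S : (B.prod I).Scen, (B.prod I).solCost (B.sol I X f) S ≤ a := by
  obtain ⟨X, hX, hX2⟩ := h1
  obtain ⟨X', hX', hX'2⟩ := h2
  refine ⟨X, hX, fun _ => X', fun _ => hX', fun S => ?_⟩
  have hdisj : Set.PairwiseDisjoint ↑X fun e : B.E => ({e} : Finset B.E) ×ˢ X' := by
    intro e he e' he' hne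
    simp only [Finset.disjoint_left, Finset.mem_product, Finset.mem_singleton]
    rintro ⟨x, y⟩ ⟨rfl, _⟩ ⟨rfl, _⟩
    exact hne rfl
  have hsum : (B.prod I).solCost (B.sol I X fun _ => X') S
      = ∑ e ∈ X, ∑ p ∈ ({e} : Finset B.E) ×ˢ X', (B.prod I).cost S p := by
    unfold Inst.solCost PairInst.sol
    exact Finset.sum_biUnion hdisj
  rw [hsum]
  have hinner : ∀ e ∈ X, ∑ p ∈ ({e} : Finset B.E) ×ˢ X', (B.prod I).cost S p
      = ∑ x ∈ X', (B.prod I).cost S (e, x) := by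
    intro e _
    rw [Finset.singleton_product]; refine (Finset.sum_map _ _ _).trans ?_
    rfl
  rw [Finset.sum_congr rfl hinner]
  by_cases h1 : B.e₁ S.1 ∈ X
  · have h2 : B.e₂ S.1 ∉ X := fun h => hX2 S.1 ⟨h1, h⟩
    calc ∑ e ∈ X, ∑ x ∈ X', (B.prod I).cost S (e, x)
        = ∑ e ∈ X, if e = B.e₁ S.1 then I.solCost X' S.2.1 else 0 := by
          refine Finset.sum_congr rfl fun e he => ?_
          by_cases he1 : e = B.e₁ S.1
          · simp [he1, PairInst.prod, Inst.solCost]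
          · have he2 : e ≠ B.e₂ S.1 := fun h => h2 (h ▸ he)
            simp [PairInst.prod, he1, he2]
      _ = I.solCost X' S.2.1 := by rw [Finset.sum_ite_eq' X (B.e₁ S.1)]; simp [h1]
      _ ≤ a := hX'2 _
  · calc ∑ e ∈ X, ∑ x ∈ X', (B.prod I).cost S (e, x)
        = ∑ e ∈ X, if e = B.e₂ S.1 then I.solCost X' S.2.2 else 0 := by
          refine Finset.sum_congr rfl fun e he => ?_
          by_cases he2 : e = B.e₂ S.1
          · have he1 : e ≠ B.e₁ S.1 := fun h => h1 (h ▸ he)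
            subst he2; simp [he1, PairInst.prod, Inst.solCost]
          · have he1 : e ≠ B.e₁ S.1 := fun h => h1 (h ▸ he)
            simp [PairInst.prod, he1, he2]
      _ ≤ I.solCost X' S.2.2 := by rw [Finset.sum_ite_eq' X (B.e₂ S.1)]; split <;> simp
      _ ≤ a := hX'2 _
end

section
/- Let an outer pair-instance (E, Φ, Γ, e₁, e₂) and an inner instance (E', Φ', Γ') be given, and let b : ℕ. If for every X ∈ Φ there exists S ∈ Γ with e₁ S ∈ X and e₂ S ∈ X, and for every X' ∈ Φ' there exists a scenario in Γ' under which the cost of X' is at least b, then for every X ∈ Φ and every f : E → Φ' there exists a scenario of the product instance under which the cost of the product solution sol(X, f) is at least 2·b. -/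
/-- If every `X ∈ Φ` contains both `e₁ S` and `e₂ S` for some `S ∈ Γ`, and
every `X' ∈ Φ'` has cost at least `b` under some inner scenario, then every product
solution `sol(X, f)` has cost at least `2·b` under some scenario of the product. -/
theorem product_lower_bound (B : PairInst) (I : Inst) (b : ℕ)
    (h1 : ∀ X ∈ B.sols, ∃ S : B.Scen, B.e₁ S ∈ X ∧ B.e₂ S ∈ X)
    (h2 : ∀ X' ∈ I.sols, ∃ S' : I.Scen, b ≤ I.solCost X' S') :
    ∀ X ∈ B.sols, ∀ f : B.E → Finset I.E, (∀ e : B.E, f e ∈ I.sols) →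
      ∃ S : (B.prod I).Scen, 2 * b ≤ (B.prod I).solCost (B.sol I X f) S := by

  intro X hX f hf
  obtain ⟨S, hS1, hS2⟩ := h1 X hX
  obtain ⟨S₁, hb1⟩ := h2 (f (B.e₁ S)) (hf _)
  obtain ⟨S₂, hb2⟩ := h2 (f (B.e₂ S)) (hf _)
  refine ⟨(S, S₁, S₂), ?_⟩
  have hdisj : (X : Set B.E).PairwiseDisjoint fun e => {e} ×ˢ f e := by
    intro a _ c _ hne
    simp only [Function.onFun, Finset.disjoint_left]
    intro p hp hp2
    simp only [Finset.mem_product, Finset.mem_singleton] at hp hp2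
    exact hne (hp.1.symm.trans hp2.1)
  have hsum : (B.prod I).solCost (B.sol I X f) (S, S₁, S₂) =
      ∑ e ∈ X, ∑ x ∈ f e, (B.prod I).cost (S, S₁, S₂) (e, x) := by
    unfold Inst.solCost PairInst.sol
    refine (Finset.sum_biUnion hdisj).trans ?_
    refine Finset.sum_congr rfl fun e _ => ?_
    erw [Finset.sum_product]
    simp
  rw [hsum]
  have key : ∀ e ∈ X, e = B.e₁ S ∨ e = B.e₂ S →
      (if e = B.e₁ S then b else b) ≤ ∑ x ∈ f e, (B.prod I).cost (S, S₁, S₂) (e, x) := by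
    intro e _ he
    rcases he with he | he <;> subst he
    · simpa [PairInst.prod, Inst.solCost] using hb1
    · have hne : B.e₂ S ≠ B.e₁ S := (B.ne S).symm
      simpa [PairInst.prod, Inst.solCost, hne] using hb2
  calc 2 * b = (if B.e₁ S = B.e₁ S then b else b) + (if B.e₂ S = B.e₁ S then b else b) := by
        simp [two_mul]
    _ ≤ ∑ x ∈ f (B.e₁ S), (B.prod I).cost (S, S₁, S₂) (B.e₁ S, x)
        + ∑ x ∈ f (B.e₂ S), (B.prod I).cost (S, S₁, S₂) (B.e₂ S, x) :=
        Nat.add_le_add (key _ hS1 (Or.inl rfl)) (key _ hS2 (Or.inr rfl))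
    _ ≤ _ := by
        have hS2' : B.e₂ S ∈ X.erase (B.e₁ S) :=
          Finset.mem_erase.mpr ⟨(B.ne S).symm, hS2⟩
        rw [← Finset.add_sum_erase X
            (fun e => ∑ x ∈ f e, (B.prod I).cost (S, S₁, S₂) (e, x)) hS1,
          ← Finset.add_sum_erase _
            (fun e => ∑ x ∈ f e, (B.prod I).cost (S, S₁, S₂) (e, x)) hS2']
        exact Nat.add_le_add le_rfl (Nat.le_add_right _ _)
end

section
/- In the iterated construction built from a pair-instance B = (E, Φ, Γ, e₁, e₂): if for every S ∈ Γ there exists X ∈ Φ with e₁ S ∉ X and e₂ S ∉ X, then for every t : ℕ and every scenario of the instance I_t there exists a solution of I_t whose cost under that scenario is 0. -/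
/-- If for every `S ∈ Γ` some `X ∈ Φ` avoids both `e₁ S` and `e₂ S`, then
for every `t` and every scenario of `I_t` there is a solution of `I_t` of cost 0. -/
theorem iter_exists_zero_cost (B : PairInst)
    (h : ∀ S : B.Scen, ∃ X ∈ B.sols, B.e₁ S ∉ X ∧ B.e₂ S ∉ X) :
    ∀ t : ℕ, ∀ S : (B.iter t).Scen,
      ∃ X ∈ (B.iter t).sols, (B.iter t).solCost X S = 0 := by
  intro t
  induction t with
  | zero =>
    intro S
    obtain ⟨X, hX, h1, h2⟩ := h S
    refine ⟨X, hX, ?_⟩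
    simp only [PairInst.iter, Inst.solCost, PairInst.toInst]
    refine Finset.sum_eq_zero fun e he => ?_
    have hne1 : e ≠ B.e₁ S := fun heq => h1 (heq ▸ he)
    have hne2 : e ≠ B.e₂ S := fun heq => h2 (heq ▸ he)
    simp [hne1, hne2]
  | succ t ih =>
    rintro ⟨S, S₁, S₂⟩
    obtain ⟨X, hX, h1, h2⟩ := h S
    obtain ⟨Y, hY⟩ := (B.iter t).sols_nonempty
    have hf : (fun _ : B.E => Y) ∈ Fintype.piFinset fun _ : B.E => (B.iter t).sols :=
      Fintype.mem_piFinset.mpr fun _ => hY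
    refine ⟨B.sol (B.iter t) X (fun _ => Y), ?_, ?_⟩
    · exact Finset.mem_image.mpr ⟨(X, fun _ => Y), Finset.mem_product.mpr ⟨hX, hf⟩, rfl⟩
    · simp only [Inst.solCost, PairInst.prod, PairInst.sol]
      erw [Finset.sum_biUnion]
      · refine Finset.sum_eq_zero fun e he => ?_
        have hne1 : e ≠ B.e₁ S := fun heq => h1 (heq ▸ he)
        have hne2 : e ≠ B.e₂ S := fun heq => h2 (heq ▸ he)
        refine Finset.sum_eq_zero fun p hp => ?_
        obtain ⟨hp1, _⟩ := Finset.mem_product.mp hp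
        have : p.1 = e := Finset.mem_singleton.mp hp1
        show (B.prod (B.iter t)).cost (S, S₁, S₂) p = 0
        simp only [PairInst.prod]
        rw [this, if_neg hne1, if_neg hne2]
      · intro a _ b _ hab
        refine Finset.disjoint_left.mpr fun p hp1 hp2 => ?_
        obtain ⟨h1, _⟩ := Finset.mem_product.mp hp1
        obtain ⟨h2, _⟩ := Finset.mem_product.mp hp2
        exact hab ((Finset.mem_singleton.mp h1).symm ▸ Finset.mem_singleton.mp h2)
end

section
/- In the iterated construction built from a pair-instance B = (E, Φ, Γ, e₁, e₂): if there exists X ∈ Φ such that for every S ∈ Γ it is not the case that both e₁ S ∈ X and e₂ S ∈ X, then for every t : ℕ there exists a solution of the instance I_t whose cost under every scenario of I_t is at most 1. -/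
lemma prod_step (B : PairInst) (I : Inst) (X : Finset B.E)
    (hXs : ∀ S : B.Scen, ¬(B.e₁ S ∈ X ∧ B.e₂ S ∈ X)) (hX : X ∈ B.sols)
    (Y : Finset I.E) (hY : Y ∈ I.sols) (hYs : ∀ S : I.Scen, I.solCost Y S ≤ 1) :
    ∃ Z ∈ (B.prod I).sols, ∀ S : (B.prod I).Scen, (B.prod I).solCost Z S ≤ 1 := by
  have hmem := Finset.mem_image_of_mem
    (f := fun p : Finset B.E × (B.E → Finset I.E) => B.sol I p.1 p.2)
    (a := (X, fun _ => Y)) (s := B.sols ×ˢ Fintype.piFinset fun _ : B.E => I.sols)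
    (Finset.mem_product.mpr ⟨hX, Fintype.mem_piFinset.mpr fun _ => hY⟩)
  refine ⟨B.sol I X (fun _ => Y), hmem, ?_⟩
  rintro ⟨S, S₁, S₂⟩
  have hdisj : (↑X : Set B.E).PairwiseDisjoint
      (fun e => ({e} : Finset B.E) ×ˢ Y) := by
    intro a _ b _ hab
    refine Finset.disjoint_left.mpr ?_
    rintro ⟨p1, p2⟩ hp hq
    simp only [Finset.mem_product, Finset.mem_singleton] at hp hq
    exact hab (hp.1.symm.trans hq.1)
  have hsum : (B.prod I).solCost (B.sol I X (fun _ => Y)) (S, S₁, S₂)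
      = ∑ e ∈ X, ∑ x ∈ Y,
          (if e = B.e₁ S then I.cost S₁ x
           else if e = B.e₂ S then I.cost S₂ x else 0) := by
    unfold Inst.solCost PairInst.sol
    beta_reduce
    exact (Finset.sum_biUnion hdisj).trans (Finset.sum_congr rfl fun e _ => by
      refine (Finset.sum_product _ _ _).trans ((Finset.sum_singleton _ _).trans ?_)
      exact Finset.sum_congr rfl fun x _ => rfl)
  rw [hsum]
  have hterm : ∀ e ∈ X, e ≠ B.e₁ S → e ≠ B.e₂ S →
      (∑ x ∈ Y, (if e = B.e₁ S then I.cost S₁ x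
           else if e = B.e₂ S then I.cost S₂ x else 0)) = 0 := by
    intro e _ h1 h2
    simp [h1, h2]
  by_cases h1 : B.e₁ S ∈ X
  · have h2 : B.e₂ S ∉ X := fun h2 => hXs S ⟨h1, h2⟩
    rw [Finset.sum_eq_single_of_mem (B.e₁ S) h1 (fun e he hne => by
      refine hterm e he hne (fun h => ?_)
      exact h2 (h ▸ he))]
    simpa [B.ne S, Inst.solCost] using hYs S₁
  · by_cases h2 : B.e₂ S ∈ X
    · rw [Finset.sum_eq_single_of_mem (B.e₂ S) h2 (fun e he hne => by
        refine hterm e he (fun h => ?_) hne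
        exact h1 (h ▸ he))]
      simpa [(B.ne S).symm, Inst.solCost] using hYs S₂
    · rw [Finset.sum_eq_zero (fun e he => hterm e he
        (fun h => h1 (h ▸ he)) (fun h => h2 (h ▸ he)))]
      exact Nat.zero_le 1

/-- If some `X ∈ Φ` never contains both `e₁ S` and `e₂ S`, then for every
`t` there is a solution of `I_t` whose cost under every scenario of `I_t` is at most 1. -/
theorem iter_upper_bound_one (B : PairInst)
    (h : ∃ X ∈ B.sols, ∀ S : B.Scen, ¬(B.e₁ S ∈ X ∧ B.e₂ S ∈ X)) :
    ∀ t : ℕ, ∃ X ∈ (B.iter t).sols,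
      ∀ S : (B.iter t).Scen, (B.iter t).solCost X S ≤ 1 := by
  obtain ⟨X, hX, hXs⟩ := h
  intro t
  induction t with
  | zero =>
    refine ⟨X, hX, fun S => ?_⟩
    have he : (B.iter 0).solCost X S
        = ∑ e ∈ X, if e = B.e₁ S ∨ e = B.e₂ S then 1 else 0 := rfl
    rw [he, ← Finset.card_filter]
    refine Finset.card_le_one.mpr ?_
    intro a ha b hb
    simp only [Finset.mem_filter] at ha hb
    rcases ha.2 with h1 | h1 <;> rcases hb.2 with h2 | h2 <;>
      first
      | (exact h1.trans h2.symm)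
      | (exfalso; exact hXs S ⟨by rw [← h1]; exact ha.1, by rw [← h2]; exact hb.1⟩)
      | (exfalso; exact hXs S ⟨by rw [← h2]; exact hb.1, by rw [← h1]; exact ha.1⟩)
  | succ t ih =>
    obtain ⟨Y, hY, hYs⟩ := ih
    exact prod_step B (B.iter t) X hXs hX Y hY hYs
end

section
/- In the iterated construction built from a pair-instance B = (E, Φ, Γ, e₁, e₂) with |Γ| = K ≥ 1 and |E| = N: for every t : ℕ, the scenario index set of the instance I_t has cardinality K^{2^{t+1} − 1} and the edge type of I_t has cardinality N^{t+1}. (In particular, for any sequence a : ℕ → ℕ with a 0 = K and a (t+1) = K · (a t)², one has a t = K^{2^{t+1} − 1} for all t.) -/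
/-- With `|Γ| = K ≥ 1` and `|E| = N`, the instance `I_t` has `K^(2^(t+1)-1)`
scenario indices and `N^(t+1)` edges; in particular any sequence with `a 0 = K` and
`a (t+1) = K * (a t)^2` satisfies `a t = K^(2^(t+1)-1)`. -/
theorem iter_card (B : PairInst) (K N : ℕ)
    (hK : Fintype.card B.Scen = K) (hK1 : 1 ≤ K) (hN : Fintype.card B.E = N) :
    (∀ t : ℕ, Fintype.card (B.iter t).Scen = K ^ (2 ^ (t + 1) - 1) ∧
      Fintype.card (B.iter t).E = N ^ (t + 1)) ∧
    (∀ a : ℕ → ℕ, a 0 = K → (∀ t, a (t + 1) = K * (a t) ^ 2) →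
      ∀ t, a t = K ^ (2 ^ (t + 1) - 1)) := by

  have key : ∀ t : ℕ, K * (K ^ (2 ^ (t + 1) - 1)) ^ 2 = K ^ (2 ^ (t + 2) - 1) := by
    intro t
    rw [← pow_mul, ← pow_succ']
    congr 1
    have h1 : 1 ≤ 2 ^ (t + 1) := Nat.one_le_two_pow
    have : 2 ^ (t + 2) = 2 * 2 ^ (t + 1) := by ring
    omega
  constructor
  · intro t
    induction t with
    | zero =>
      exact ⟨by show Fintype.card B.Scen = _; simpa using hK, by show Fintype.card B.E = _; simpa using hN⟩
    | succ t ih =>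
      constructor
      · show Fintype.card (B.Scen × (B.iter t).Scen × (B.iter t).Scen) = _
        rw [Fintype.card_prod, Fintype.card_prod, hK, ih.1, ← key t]
        ring
      · show Fintype.card (B.E × (B.iter t).E) = _
        rw [Fintype.card_prod, hN, ih.2]; ring
  · intro a h0 hrec t
    induction t with
    | zero => simpa using h0
    | succ t ih => rw [hrec, ih, key]
end

section
/- For every set C of edges of the graph G_m, the vertices s and t are not connected in the graph obtained from G_m by deleting the edges in C if and only if for every i : Fin m at least one of the three edges of path i belongs to C. -/
/-- Vertex type of the cut graph `G_m`: internal vertices `(i, k)` plus `s = Sum.inr false`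
and `t = Sum.inr true`. -/
abbrev Vcut (m : ℕ) := (Fin m × Fin 2) ⊕ Bool

/-- The graph `G_m`, consisting of `m` internally disjoint `s-t` paths, the `i`-th path
having edges `s — (i,0)`, `(i,0) — (i,1)`, `(i,1) — t`. -/
def Gm (m : ℕ) : SimpleGraph (Vcut m) :=
  SimpleGraph.fromEdgeSet {e : Sym2 (Vcut m) | ∃ i : Fin m,
    e = s(Sum.inr false, Sum.inl (i, 0)) ∨
    e = s(Sum.inl (i, 0), Sum.inl (i, 1)) ∨
    e = s(Sum.inl (i, 1), Sum.inr true)}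

/-- Deleting an edge set `D` from `G_m` disconnects `s` from `t` iff for
every `i : Fin m` at least one of the three edges of path `i` belongs to `D`. -/
theorem st_disconnected_iff (m : ℕ) (D : Set (Sym2 (Vcut m))) :
    (¬ ((Gm m).deleteEdges D).Reachable (Sum.inr false) (Sum.inr true)) ↔
    ∀ i : Fin m,
      s(Sum.inr false, Sum.inl (i, 0)) ∈ D ∨
      s(Sum.inl (i, 0), Sum.inl (i, 1)) ∈ D ∨
      s(Sum.inl (i, 1), Sum.inr true) ∈ D := by
  classical
  constructor
  · intro hnr i
    by_contra hc
    push_neg at hc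
    obtain ⟨h1, h2, h3⟩ := hc
    apply hnr
    have a1 : ((Gm m).deleteEdges D).Adj (Sum.inr false) (Sum.inl (i, 0)) :=
      SimpleGraph.deleteEdges_adj.mpr ⟨⟨⟨i, Or.inl rfl⟩, by simp⟩, h1⟩
    have a2 : ((Gm m).deleteEdges D).Adj (Sum.inl (i, 0)) (Sum.inl (i, 1)) :=
      SimpleGraph.deleteEdges_adj.mpr ⟨⟨⟨i, Or.inr (Or.inl rfl)⟩, by simp⟩, h2⟩
    have a3 : ((Gm m).deleteEdges D).Adj (Sum.inl (i, 1)) (Sum.inr true) :=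
      SimpleGraph.deleteEdges_adj.mpr ⟨⟨⟨i, Or.inr (Or.inr rfl)⟩, by simp⟩, h3⟩
    exact (a1.reachable.trans a2.reachable).trans a3.reachable
  · intro h hr
    set f : Vcut m → Bool := fun v => match v with
      | Sum.inr b => b
      | Sum.inl (i, k) =>
        if s(Sum.inr false, Sum.inl (i, 0)) ∈ D then true
        else if k = 0 then false
        else if s(Sum.inl (i, 0), Sum.inl (i, 1)) ∈ D then true else false
      with hf
    have key : ∀ a b, ((Gm m).deleteEdges D).Adj a b → f a = f b := by
      intro a b hab
      rw [SimpleGraph.deleteEdges_adj] at hab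
      obtain ⟨⟨⟨i, hi⟩, hne⟩, hD⟩ := hab
      rcases hi with h' | h' | h' <;> rw [Sym2.eq_iff] at h' <;>
          rcases h' with ⟨ha, hb⟩ | ⟨hb, ha⟩ <;> subst ha <;> subst hb
      · simp [hf, hD]
      · rw [Sym2.eq_swap] at hD; simp [hf, hD]
      · by_cases hfst : s(Sum.inr false, Sum.inl (i, 0)) ∈ D <;> simp [hf, hfst, hD]
      · rw [Sym2.eq_swap] at hD
        by_cases hfst : s(Sum.inr false, Sum.inl (i, 0)) ∈ D <;> simp [hf, hfst, hD]
      · rcases h i with hx | hx | hx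
        · simp [hf, hx]
        · simp [hf, hx]
        · exact absurd hx hD
      · rw [Sym2.eq_swap] at hD
        rcases h i with hx | hx | hx
        · simp [hf, hx]
        · simp [hf, hx]
        · exact absurd hx hD
    have key2 : ∀ a b, ((Gm m).deleteEdges D).Reachable a b → f a = f b := by
      intro a b hab
      obtain ⟨w⟩ := hab
      induction w with
      | nil => rfl
      | cons hadj p ih => exact (key _ _ hadj).trans ih
    have := key2 _ _ hr
    simp [hf] at this
end

section
/- For every σ : Fin m → Fin 3 there is a simple path from u_0 to u_m in H_m whose edge set is exactly {u_i — w_{i, σ i} | i : Fin m} ∪ {w_{i, σ i} — u_{i+1} | i : Fin m}; conversely, the edge set of every simple path from u_0 to u_m in H_m has this form for some σ : Fin m → Fin 3. -/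
/-- Vertex type of the path graph `H_m`: hub vertices `u_k = Sum.inl k` for
`k : Fin (m+1)` and literal vertices `w_{i,j} = Sum.inr (i, j)`. -/
abbrev Vpath (m : ℕ) := Fin (m + 1) ⊕ (Fin m × Fin 3)

/-- The series-parallel graph `H_m` whose edges are the literal edges `u_i — w_{i,j}`
and the dummy edges `w_{i,j} — u_{i+1}` for `i : Fin m`, `j : Fin 3`. -/
def Hm (m : ℕ) : SimpleGraph (Vpath m) :=
  SimpleGraph.fromEdgeSet {e : Sym2 (Vpath m) | ∃ i : Fin m, ∃ j : Fin 3,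
    e = s(Sum.inl i.castSucc, Sum.inr (i, j)) ∨
    e = s(Sum.inr (i, j), Sum.inl i.succ)}

lemma Hm_adj1 (m : ℕ) (i : Fin m) (j : Fin 3) :
    (Hm m).Adj (Sum.inl i.castSucc) (Sum.inr (i, j)) := by
  rw [Hm, SimpleGraph.fromEdgeSet_adj]
  exact ⟨⟨i, j, Or.inl rfl⟩, by simp⟩

lemma Hm_adj2 (m : ℕ) (i : Fin m) (j : Fin 3) :
    (Hm m).Adj (Sum.inr (i, j)) (Sum.inl i.succ) := by
  rw [Hm, SimpleGraph.fromEdgeSet_adj]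
  exact ⟨⟨i, j, Or.inr rfl⟩, by simp⟩

def fw (m : ℕ) (σ : Fin m → Fin 3) :
    (n : ℕ) → (k : ℕ) → (h : k + n = m) →
      (Hm m).Walk (Sum.inl ⟨k, by omega⟩) (Sum.inl (Fin.last m))
  | 0, k, h => SimpleGraph.Walk.nil.copy rfl
      (by congr 1; exact Fin.ext (by simp [Fin.last]; omega))
  | (n+1), k, h =>
      SimpleGraph.Walk.cons (Hm_adj1 m ⟨k, by omega⟩ (σ ⟨k, by omega⟩))
        (SimpleGraph.Walk.cons (Hm_adj2 m ⟨k, by omega⟩ (σ ⟨k, by omega⟩))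
          (fw m σ n (k+1) (by omega)))

lemma fw_support (m : ℕ) (σ : Fin m → Fin 3) :
    ∀ n k (h : k + n = m), ∀ v ∈ (fw m σ n k h).support,
      (∀ b : Fin (m+1), v = Sum.inl b → k ≤ b.val) ∧
      (∀ i j, v = Sum.inr (i, j) → k ≤ i.val ∧ j = σ i) := by
  intro n
  induction n with
  | zero =>
    intro k h v hv
    simp only [fw, SimpleGraph.Walk.support_copy, SimpleGraph.Walk.support_nil,
      List.mem_singleton] at hv
    subst hv
    constructor
    · rintro b hb
      obtain rfl : b = ⟨k, by omega⟩ := by exact Sum.inl.inj hb.symm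
      exact le_refl k
    · rintro i j hij; simp at hij
  | succ n ih =>
    intro k h v hv
    simp only [fw, SimpleGraph.Walk.support_cons, List.mem_cons] at hv
    rcases hv with rfl | rfl | hv
    · constructor
      · rintro b hb
        obtain rfl : b = (⟨k, by omega⟩ : Fin m).castSucc := Sum.inl.inj hb.symm
        simp
      · rintro i j hij; simp at hij
    · constructor
      · rintro b hb; simp at hb
      · rintro i j hij
        obtain ⟨rfl, rfl⟩ : i = (⟨k, by omega⟩ : Fin m) ∧ j = σ ⟨k, by omega⟩ := by
          simpa [Prod.ext_iff] using Sum.inr.inj hij.symm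
        exact ⟨le_refl _, rfl⟩
    · obtain ⟨h1, h2⟩ := ih (k+1) (by omega) v hv
      exact ⟨fun b hb => le_trans (by omega) (h1 b hb),
        fun i j hij => ⟨le_trans (by omega) (h2 i j hij).1, (h2 i j hij).2⟩⟩

lemma fw_isPath (m : ℕ) (σ : Fin m → Fin 3) :
    ∀ n k (h : k + n = m), (fw m σ n k h).IsPath := by
  intro n
  induction n with
  | zero =>
    intro k h
    simp only [fw, SimpleGraph.Walk.isPath_copy]
    exact SimpleGraph.Walk.IsPath.nil
  | succ n ih =>
    intro k h
    simp only [fw, SimpleGraph.Walk.cons_isPath_iff]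
    refine ⟨⟨ih (k+1) (by omega), ?_⟩, ?_⟩
    · intro hmem
      have := (fw_support m σ (n) (k+1) (by omega) _ hmem).2 ⟨k, by omega⟩ _ rfl
      exact Nat.not_succ_le_self k this.1
    · simp only [SimpleGraph.Walk.support_cons, List.mem_cons]
      rintro (habs | hmem)
      · simp at habs
      · have := (fw_support m σ n (k+1) (by omega) _ hmem).1 ⟨k, by omega⟩ rfl
        simp at this

lemma fw_edges (m : ℕ) (σ : Fin m → Fin 3) :
    ∀ n k (h : k + n = m), ∀ e, e ∈ (fw m σ n k h).edges ↔
      ∃ i : Fin m, k ≤ i.val ∧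
        (e = s(Sum.inl i.castSucc, Sum.inr (i, σ i)) ∨
         e = s(Sum.inr (i, σ i), Sum.inl i.succ)) := by
  intro n
  induction n with
  | zero =>
    intro k h e
    simp only [fw, SimpleGraph.Walk.edges_copy, SimpleGraph.Walk.edges_nil,
      List.not_mem_nil, false_iff]
    rintro ⟨i, hki, -⟩
    omega
  | succ n ih =>
    intro k h e
    simp only [fw, SimpleGraph.Walk.edges_cons, List.mem_cons, ih (k+1) (by omega)]
    constructor
    · rintro (rfl | rfl | ⟨i, hki, hi⟩)
      · exact ⟨⟨k, by omega⟩, le_refl _, Or.inl rfl⟩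
      · exact ⟨⟨k, by omega⟩, le_refl _, Or.inr rfl⟩
      · exact ⟨i, by omega, hi⟩
    · rintro ⟨i, hki, hi⟩
      rcases Nat.eq_or_lt_of_le hki with heq | hlt
      · subst heq
        rcases hi with rfl | rfl
        · exact Or.inl rfl
        · exact Or.inr (Or.inl rfl)
      · exact Or.inr (Or.inr ⟨i, by omega, hi⟩)

lemma Hm_adj_inl (m : ℕ) (a : Fin (m+1)) (v : Vpath m)
    (h : (Hm m).Adj (Sum.inl a) v) :
    ∃ i j, v = Sum.inr (i, j) ∧ (a = i.castSucc ∨ a = i.succ) := by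
  rw [Hm, SimpleGraph.fromEdgeSet_adj] at h
  obtain ⟨⟨i, j, hc | hc⟩, -⟩ := h <;>
    rw [Sym2.eq_iff] at hc <;>
    rcases hc with ⟨h1, h2⟩ | ⟨h1, h2⟩ <;> simp_all

lemma Hm_adj_inr (m : ℕ) (i : Fin m) (j : Fin 3) (v : Vpath m)
    (h : (Hm m).Adj (Sum.inr (i, j)) v) :
    v = Sum.inl i.castSucc ∨ v = Sum.inl i.succ := by
  rw [Hm, SimpleGraph.fromEdgeSet_adj] at h
  obtain ⟨⟨i', j', hc | hc⟩, -⟩ := h <;>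
    rw [Sym2.eq_iff] at hc <;>
    rcases hc with ⟨h1, h2⟩ | ⟨h1, h2⟩ <;> simp_all

lemma conv (m : ℕ) : ∀ (N : ℕ) (a : Fin (m+1))
    (p : (Hm m).Walk (Sum.inl a) (Sum.inl (Fin.last m))),
    p.length ≤ N → p.IsPath →
    (∀ b : Fin (m+1), (Sum.inl b : Vpath m) ∈ p.support → a ≤ b) →
    ∃ σ : Fin m → Fin 3, ∀ e, e ∈ p.edges ↔
      ∃ i : Fin m, a.val ≤ i.val ∧
        (e = s(Sum.inl i.castSucc, Sum.inr (i, σ i)) ∨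
         e = s(Sum.inr (i, σ i), Sum.inl i.succ)) := by
  intro N
  induction N with
  | zero =>
    intro a p hlen hpath hgood
    have hnil : p.length = 0 := Nat.le_zero.mp hlen
    have := SimpleGraph.Walk.eq_of_length_eq_zero hnil
    obtain rfl : a = Fin.last m := Sum.inl.inj this
    have hedg : p.edges = [] :=
      List.eq_nil_of_length_eq_zero (by rw [SimpleGraph.Walk.length_edges]; omega)
    refine ⟨fun _ => 0, fun e => ?_⟩
    simp only [hedg, List.not_mem_nil, false_iff]
    rintro ⟨i, hi, -⟩
    have := i.isLt
    simp [Fin.last] at hi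
    omega
  | succ N ih =>
    intro a p hlen hpath hgood
    by_cases ha : a = Fin.last m
    · subst ha
      cases p with
      | nil =>
        refine ⟨fun _ => 0, fun e => ?_⟩
        simp only [SimpleGraph.Walk.edges_nil, List.not_mem_nil, false_iff]
        rintro ⟨i, hi, -⟩
        have := i.isLt
        simp [Fin.last] at hi
        omega
      | cons h1 q =>
        exfalso
        rw [SimpleGraph.Walk.cons_isPath_iff] at hpath
        exact hpath.2 q.end_mem_support
    · have ham : a.val < m := by
        have := a.isLt
        rcases Nat.lt_or_ge a.val m with h | h
        · exact h
        · exact absurd (Fin.ext (by simp [Fin.last]; omega) : a = Fin.last m) ha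
      obtain ⟨v, h1, q, rfl⟩ :=
        p.exists_eq_cons_of_ne (fun hh => ha (Sum.inl.inj hh))
      obtain ⟨i, j, rfl, hai⟩ := Hm_adj_inl m a _ h1
      obtain ⟨v', h2, r, rfl⟩ := q.exists_eq_cons_of_ne (by simp)
      rw [SimpleGraph.Walk.cons_isPath_iff] at hpath
      obtain ⟨hq_path, ha_not⟩ := hpath
      rw [SimpleGraph.Walk.cons_isPath_iff] at hq_path
      obtain ⟨hr_path, hw_not⟩ := hq_path
      rcases Hm_adj_inr m i j v' h2 with rfl | rfl
      · -- went back: v' = inl i.castSucc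
        exfalso
        rcases hai with hai | hai
        · -- a = castSucc i, so v' = inl a, but inl a ∉ support of (cons h2 r)
          exact ha_not (by rw [hai]; exact List.mem_cons_of_mem _ r.start_mem_support)
        · -- a = i.succ : hgood at castSucc i gives a ≤ castSucc i, contradiction
          have hmem : (Sum.inl i.castSucc : Vpath m) ∈
              (SimpleGraph.Walk.cons h1 (SimpleGraph.Walk.cons h2 r)).support := by
            simp [SimpleGraph.Walk.support_cons]
          have := hgood i.castSucc hmem
          rw [hai] at this
          simp [Fin.le_def] at this
      · -- forward: v' = inl i.succ
        have hai' : a = i.castSucc := by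
          rcases hai with hai | hai
          · exact hai
          · exfalso
            apply ha_not
            rw [hai]
            exact List.mem_cons_of_mem _ r.start_mem_support
        have hr_good : ∀ c : Fin (m+1), (Sum.inl c : Vpath m) ∈ r.support → i.succ ≤ c := by
          intro c hc
          have h1c : a ≤ c := hgood c (by
            simp only [SimpleGraph.Walk.support_cons, List.mem_cons]
            exact Or.inr (Or.inr hc))
          have h2c : c ≠ a := by
            rintro rfl
            exact ha_not (List.mem_cons_of_mem _ hc)
          rw [hai'] at h1c h2c
          have hcc : c.val ≠ i.val := fun hh =>
            h2c (Fin.ext (by simpa using hh))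
          rw [Fin.le_def] at h1c ⊢
          simp only [Fin.coe_castSucc] at h1c
          simp only [Fin.val_succ]
          omega
        have hlen' : r.length ≤ N := by
          simp only [SimpleGraph.Walk.length_cons] at hlen
          omega
        obtain ⟨σ', hσ'⟩ := ih i.succ r hlen' hr_path hr_good
        refine ⟨Function.update σ' i j, fun e => ?_⟩
        simp only [SimpleGraph.Walk.edges_cons, List.mem_cons, hσ']
        constructor
        · rintro (rfl | rfl | ⟨i', hi', hcase⟩)
          · exact ⟨i, by rw [hai']; simp, Or.inl (by rw [hai', Function.update_self])⟩
          · exact ⟨i, by rw [hai']; simp, Or.inr (by rw [Function.update_self])⟩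
          · have hne : i' ≠ i := by
              rintro rfl
              simp [Fin.val_succ] at hi'
            refine ⟨i', ?_, ?_⟩
            · rw [hai']; simp only [Fin.coe_castSucc]
              simp only [Fin.val_succ] at hi'
              omega
            · rwa [Function.update_of_ne hne]
        · rintro ⟨i', hi', hcase⟩
          by_cases hii : i' = i
          · subst hii
            rw [Function.update_self] at hcase
            rcases hcase with rfl | rfl
            · exact Or.inl (by rw [hai'])
            · exact Or.inr (Or.inl rfl)
          · refine Or.inr (Or.inr ⟨i', ?_, ?_⟩)
            · simp only [Fin.val_succ]
              rw [hai'] at hi'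
              simp only [Fin.coe_castSucc] at hi'
              have : i'.val ≠ i.val := fun hh => hii (Fin.ext hh)
              omega
            · rw [Function.update_of_ne hii] at hcase
              exact hcase


/-- For every `σ : Fin m → Fin 3` there is a simple path from `u_0` to
`u_m` in `H_m` whose edge set is exactly
`{u_i — w_{i,σ i}} ∪ {w_{i,σ i} — u_{i+1}}`, and conversely the edge set of every simple
path from `u_0` to `u_m` has this form for some `σ`. -/
theorem paths_of_Hm (m : ℕ) :
    (∀ σ : Fin m → Fin 3,
      ∃ p : (Hm m).Walk (Sum.inl 0) (Sum.inl (Fin.last m)), p.IsPath ∧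
        {e : Sym2 (Vpath m) | e ∈ p.edges} =
        {e : Sym2 (Vpath m) | ∃ i : Fin m,
          e = s(Sum.inl i.castSucc, Sum.inr (i, σ i)) ∨
          e = s(Sum.inr (i, σ i), Sum.inl i.succ)}) ∧
    (∀ p : (Hm m).Walk (Sum.inl 0) (Sum.inl (Fin.last m)), p.IsPath →
      ∃ σ : Fin m → Fin 3,
        {e : Sym2 (Vpath m) | e ∈ p.edges} =
        {e : Sym2 (Vpath m) | ∃ i : Fin m,
          e = s(Sum.inl i.castSucc, Sum.inr (i, σ i)) ∨
          e = s(Sum.inr (i, σ i), Sum.inl i.succ)}) := by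
  constructor
  · intro σ
    refine ⟨(fw m σ m 0 (by omega)).copy (by congr 1) rfl, ?_, ?_⟩
    · rw [SimpleGraph.Walk.isPath_copy]
      exact fw_isPath m σ m 0 (by omega)
    · ext e
      simp only [Set.mem_setOf_eq, SimpleGraph.Walk.edges_copy,
        fw_edges m σ m 0 (by omega) e]
      exact ⟨fun ⟨i, _, hi⟩ => ⟨i, hi⟩, fun ⟨i, hi⟩ => ⟨i, Nat.zero_le _, hi⟩⟩
  · intro p hpath
    obtain ⟨σ, hσ⟩ := conv m p.length 0
      (p.copy (by congr 1) rfl) (by simp) (by rwa [SimpleGraph.Walk.isPath_copy])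
      (fun b _ => Fin.zero_le b)
    refine ⟨σ, ?_⟩
    ext e
    simp only [Set.mem_setOf_eq]
    have := hσ e
    rw [SimpleGraph.Walk.edges_copy] at this
    rw [this]
    exact ⟨fun ⟨i, _, hi⟩ => ⟨i, hi⟩, fun ⟨i, hi⟩ => ⟨i, Nat.zero_le _, hi⟩⟩
end

section
/- For every spanning tree T of H_m and every i : Fin m, there exists j : Fin 3 such that the literal edge u_i — w_{i,j} belongs to the edge set of T. -/
/-- Every spanning tree of `H_m` contains, for every `i : Fin m`, at least
one literal edge `u_i — w_{i,j}`. -/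
theorem spanningTree_contains_literal_edge (m : ℕ) (T : SimpleGraph (Vpath m))
    (hle : T ≤ Hm m) (hconn : T.Connected) (hacyc : T.IsAcyclic) :
    ∀ i : Fin m, ∃ j : Fin 3,
      s(Sum.inl i.castSucc, Sum.inr (i, j)) ∈ T.edgeSet := by
  intro i
  classical
  -- The cut: vertices "at or before" position i
  let P : Vpath m → Prop := fun v => match v with
    | Sum.inl k => k.val ≤ i.val
    | Sum.inr p => p.1.val < i.val
  obtain ⟨W⟩ := hconn (Sum.inl i.castSucc) (Sum.inl i.succ)
  have key : ∀ {a b : Vpath m}, T.Walk a b → P a → ¬ P b →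
      ∃ x y, T.Adj x y ∧ P x ∧ ¬ P y := by
    intro a b w
    induction w with
    | nil => exact fun ha hb => absurd ha hb
    | @cons a c b h w ih =>
      intro ha hb
      by_cases hc : P c
      · exact ih hc hb
      · exact ⟨a, c, h, ha, hc⟩
  have hPa : P (Sum.inl i.castSucc) := by simp [P]
  have hPb : ¬ P (Sum.inl i.succ) := by simp [P]
  obtain ⟨x, y, hxy, hx, hy⟩ := key W hPa hPb
  have hH := hle hxy
  rw [Hm, SimpleGraph.fromEdgeSet_adj] at hH
  obtain ⟨⟨i', j', hcase⟩, hne⟩ := hH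
  rcases hcase with h1 | h1 <;> rw [Sym2.eq_iff] at h1 <;>
    rcases h1 with ⟨hx1, hy1⟩ | ⟨hx1, hy1⟩ <;> subst hx1 <;> subst hy1 <;>
    simp only [P, Fin.coe_castSucc, Fin.val_succ] at hx hy
  · -- x = u_{i'}, y = w_{i',j'} : the literal edge, with i' = i
    have : i' = i := Fin.ext (by omega)
    subst this
    exact ⟨j', hxy⟩
  · exact absurd (Nat.le_of_lt hx) hy
  · omega
  · omega
end

section
/- For every σ : Fin m → Fin 3 there exists a spanning tree T of H_m whose set of literal edges is exactly {u_i — w_{i, σ i} | i : Fin m}; that is, for all i : Fin m and j : Fin 3, the literal edge u_i — w_{i,j} belongs to T if and only if j = σ i. -/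
open SimpleGraph

/-- A cycle cannot have a vertex of (unique-up-neighbor) minimal rank as base point. -/
lemma no_cycle_at_min {V : Type*} {G : SimpleGraph V} (f : V → ℕ)
    (hne : ∀ a b, G.Adj a b → f a ≠ f b)
    (huniq : ∀ a b c, G.Adj a b → G.Adj a c → f a < f b → f a < f c → b = c)
    {u : V} (d : G.Walk u u) (hd : d.IsCycle)
    (hmin : ∀ x ∈ d.support, f u ≤ f x) : False := by
  cases d with
  | nil => exact hd.ne_nil rfl
  | @cons _ b _ hadj p =>
    have hpnil : ¬ p.Nil := by
      intro h
      exact hadj.ne h.eq.symm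
    have hqnil : ¬ p.reverse.Nil := by
      intro h
      exact hadj.ne h.eq
    obtain ⟨a, hadj2, r, hqe⟩ := (Walk.not_nil_iff).mp hqnil
    have hedges : p.edges.reverse = s(u, a) :: r.edges := by
      rw [← Walk.edges_reverse, hqe, Walk.edges_cons]
    have hua_mem : s(u, a) ∈ p.edges := by
      rw [← List.mem_reverse, hedges]; exact List.mem_cons_self
    have ha_supp : a ∈ p.support := Walk.snd_mem_support_of_mem_edges p hua_mem
    have hnodup : (s(u, b) :: p.edges).Nodup := by
      have := hd.edges_nodup
      rwa [Walk.edges_cons] at this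
    have hab : a ≠ b := by
      intro h
      exact (List.nodup_cons.mp hnodup).1 (h ▸ hua_mem)
    have hb_supp : b ∈ (Walk.cons hadj p).support := by
      simp [Walk.support_cons, Walk.start_mem_support]
    have ha_supp' : a ∈ (Walk.cons hadj p).support := by
      simp [Walk.support_cons]; exact Or.inr ha_supp
    have hub : f u < f b := lt_of_le_of_ne (hmin b hb_supp) (hne u b hadj)
    have hua : f u < f a := lt_of_le_of_ne (hmin a ha_supp') (hne u a hadj2)
    exact hab (huniq u a b hadj2 hadj hua hub)

/-- A graph admitting a rank function such that adjacent vertices have different ranks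
and each vertex has at most one neighbor of strictly larger rank is acyclic. -/
lemma acyclic_of_rank {V : Type*} {G : SimpleGraph V} (f : V → ℕ)
    (hne : ∀ a b, G.Adj a b → f a ≠ f b)
    (huniq : ∀ a b c, G.Adj a b → G.Adj a c → f a < f b → f a < f c → b = c) :
    G.IsAcyclic := by
  classical
  intro v c hc
  obtain ⟨u, hu, hmin⟩ : ∃ u ∈ c.support.toFinset, ∀ x ∈ c.support.toFinset, f u ≤ f x := by
    apply Finset.exists_min_image
    simp [List.toFinset_nonempty_iff]
  rw [List.mem_toFinset] at hu
  have hc' := hc.rotate hu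
  refine no_cycle_at_min f hne huniq (c.rotate u hu) hc' ?_
  intro x hx
  apply hmin
  rw [List.mem_toFinset]
  rw [Walk.support_eq_cons] at hx
  rcases List.mem_cons.mp hx with h | h
  · exact h ▸ hu
  · exact List.mem_of_mem_tail ((Walk.support_rotate c u hu).mem_iff.mp h)

/-- For every `σ : Fin m → Fin 3` there is a spanning tree of `H_m` whose
literal edges are exactly the edges `u_i — w_{i, σ i}`. -/
theorem exists_spanningTree_with_literal_edges (m : ℕ) (σ : Fin m → Fin 3) :
    ∃ T : SimpleGraph (Vpath m), T ≤ Hm m ∧ T.Connected ∧ T.IsAcyclic ∧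
      ∀ (i : Fin m) (j : Fin 3),
        (s(Sum.inl i.castSucc, Sum.inr (i, j)) ∈ T.edgeSet ↔ j = σ i) := by
  classical
  set E : Set (Sym2 (Vpath m)) :=
    {e | ∃ i : Fin m, e = s(Sum.inl i.castSucc, Sum.inr (i, σ i))} ∪
    {e | ∃ i : Fin m, ∃ j : Fin 3, e = s(Sum.inr (i, j), Sum.inl i.succ)} with hE
  have hadj : ∀ a b, (SimpleGraph.fromEdgeSet E).Adj a b ↔
      ((∃ i : Fin m, (a = Sum.inl i.castSucc ∧ b = Sum.inr (i, σ i)) ∨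
         (b = Sum.inl i.castSucc ∧ a = Sum.inr (i, σ i))) ∨
       (∃ (i : Fin m) (j : Fin 3), (a = Sum.inr (i, j) ∧ b = Sum.inl i.succ) ∨
         (b = Sum.inr (i, j) ∧ a = Sum.inl i.succ))) := by
    intro a b
    rw [SimpleGraph.fromEdgeSet_adj, hE]
    simp only [Set.mem_union, Set.mem_setOf_eq, Sym2.eq_iff]
    aesop
  have hlit : ∀ i : Fin m,
      (SimpleGraph.fromEdgeSet E).Adj (Sum.inl i.castSucc) (Sum.inr (i, σ i)) := by
    intro i
    rw [hadj]
    exact Or.inl ⟨i, Or.inl ⟨rfl, rfl⟩⟩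
  have hdum : ∀ (i : Fin m) (j : Fin 3),
      (SimpleGraph.fromEdgeSet E).Adj (Sum.inr (i, j)) (Sum.inl i.succ) := by
    intro i j
    rw [hadj]
    exact Or.inr ⟨i, j, Or.inl ⟨rfl, rfl⟩⟩
  refine ⟨SimpleGraph.fromEdgeSet E, ?_, ?_, ?_, ?_⟩
  · -- T ≤ Hm
    apply SimpleGraph.fromEdgeSet_mono
    rw [hE]
    rintro e (⟨i, he⟩ | ⟨i, j, he⟩)
    · exact ⟨i, σ i, Or.inl he⟩
    · exact ⟨i, j, Or.inr he⟩
  · -- Connected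
    have hreach : ∀ k : ℕ, ∀ hk : k ≤ m,
        (SimpleGraph.fromEdgeSet E).Reachable (Sum.inl (⟨0, Nat.succ_pos m⟩ : Fin (m+1)))
          (Sum.inl (⟨k, Nat.lt_succ_of_le hk⟩ : Fin (m+1))) := by
      intro k
      induction k with
      | zero => intro _; rfl
      | succ n ih =>
        intro hk
        have hn : n ≤ m := Nat.le_of_succ_le hk
        refine (ih hn).trans ?_
        have h1 : (⟨n, Nat.lt_succ_of_le hn⟩ : Fin (m+1)) = (⟨n, hk⟩ : Fin m).castSucc := by
          ext; simp
        have h2 : (⟨n + 1, Nat.lt_succ_of_le hk⟩ : Fin (m+1)) = (⟨n, hk⟩ : Fin m).succ := by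
          ext; simp
        rw [h1, h2]
        exact ((hlit ⟨n, hk⟩).reachable).trans ((hdum ⟨n, hk⟩ (σ ⟨n, hk⟩)).reachable)
    have hall : ∀ x : Vpath m,
        (SimpleGraph.fromEdgeSet E).Reachable (Sum.inl (⟨0, Nat.succ_pos m⟩ : Fin (m+1))) x := by
      rintro (k | ⟨i, j⟩)
      · have : k = (⟨k.val, Nat.lt_succ_of_le (Nat.lt_succ_iff.mp k.isLt)⟩ : Fin (m+1)) := by
          ext; rfl
        rw [this]
        exact hreach k.val (Nat.lt_succ_iff.mp k.isLt)
      · have h2 : (⟨i.val + 1, Nat.lt_succ_of_le i.isLt⟩ : Fin (m+1)) = i.succ := by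
          ext; simp
        refine ((hreach (i.val + 1) i.isLt).trans ?_)
        rw [h2]
        exact (hdum i j).symm.reachable
    constructor
    intro a b
    exact (hall a).symm.trans (hall b)
  · -- Acyclic
    set f : Vpath m → ℕ := fun x => Sum.elim (fun k => 2 * k.val) (fun p => 2 * p.1.val + 1) x
      with hf
    have hup : ∀ a b, (SimpleGraph.fromEdgeSet E).Adj a b → f a < f b →
        (∃ i : Fin m, a = Sum.inl i.castSucc ∧ b = Sum.inr (i, σ i)) ∨
        (∃ (i : Fin m) (j : Fin 3), a = Sum.inr (i, j) ∧ b = Sum.inl i.succ) := by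
      intro a b hab hlt
      rw [hadj] at hab
      obtain ⟨i, ⟨ha, hb⟩ | ⟨hb, ha⟩⟩ | ⟨i, j, ⟨ha, hb⟩ | ⟨hb, ha⟩⟩ := hab
      · exact Or.inl ⟨i, ha, hb⟩
      · exfalso; subst ha; subst hb
        simp only [hf, Sum.elim_inl, Sum.elim_inr, Fin.coe_castSucc] at hlt; omega
      · exact Or.inr ⟨i, j, ha, hb⟩
      · exfalso; subst ha; subst hb
        simp only [hf, Sum.elim_inl, Sum.elim_inr, Fin.val_succ] at hlt; omega
    apply acyclic_of_rank f
    · intro a b hab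
      rw [hadj] at hab
      obtain ⟨i, ⟨ha, hb⟩ | ⟨hb, ha⟩⟩ | ⟨i, j, ⟨ha, hb⟩ | ⟨hb, ha⟩⟩ := hab <;>
        subst ha <;> subst hb <;>
        simp only [hf, Sum.elim_inl, Sum.elim_inr, Fin.coe_castSucc, Fin.val_succ] <;> omega
    · intro a b c hab hac hb hc
      rcases hup a b hab hb with ⟨i, rfl, rfl⟩ | ⟨i, j, rfl, rfl⟩ <;>
        rcases hup _ _ hac hc with ⟨i', h1, rfl⟩ | ⟨i', j', h1, rfl⟩
      · obtain rfl : i = i' := Fin.castSucc_inj.mp (Sum.inl.inj h1)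
        rfl
      · exact absurd h1 (by simp)
      · exact absurd h1 (by simp)
      · have h3 := Sum.inr.inj h1
        rw [Prod.mk.injEq] at h3
        obtain ⟨rfl, rfl⟩ := h3
        rfl
  · -- literal edges
    intro i j
    rw [SimpleGraph.edgeSet_fromEdgeSet, hE]
    simp only [Set.mem_diff, Set.mem_union, Set.mem_setOf_eq, Sym2.eq_iff, Sym2.isDiag_iff_proj_eq]
    constructor
    · rintro ⟨(⟨i', h⟩ | ⟨i', j', h⟩), _⟩
      · rcases h with ⟨h1, h2⟩ | ⟨h1, h2⟩
        · have h3 := Sum.inr.inj h2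
          rw [Prod.mk.injEq] at h3
          obtain ⟨rfl, rfl⟩ := h3
          rfl
        · exact absurd h1 (by simp)
      · rcases h with ⟨h1, h2⟩ | ⟨h1, h2⟩
        · exact absurd h1 (by simp)
        · have h3 := Sum.inr.inj h2
          rw [Prod.mk.injEq] at h3
          obtain ⟨rfl, rfl⟩ := h3
          have h4 := Sum.inl.inj h1
          rw [Fin.ext_iff] at h4
          simp only [Fin.coe_castSucc, Fin.val_succ] at h4
          omega
    · rintro rfl
      exact ⟨Or.inl ⟨i, Or.inl ⟨rfl, rfl⟩⟩, by simp⟩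
end

section
/- The 3-CNF formula C is satisfiable if and only if there exists a spanning tree T of H_m such that for every pair of contradictory occurrences o and o', at most one of the two literal edges corresponding to o and o' belongs to T. (Equivalently: the minmax spanning tree value of the constructed instance is at most 1 if C is satisfiable and at least 2 otherwise.) -/
/-- Any walk from a vertex satisfying `L` to one not satisfying `L` crosses the cut. -/
private lemma walk_cross {V : Type*} {G : SimpleGraph V} {L : V → Prop} :
    ∀ {a b : V} (p : G.Walk a b), L a → ¬ L b →
      ∃ x y, G.Adj x y ∧ L x ∧ ¬ L y ∧ s(x, y) ∈ p.edges := by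
  intro a b p
  induction p with
  | nil => intro h h'; exact absurd h h'
  | @cons u v w h p ih =>
    intro hu hw
    by_cases hv : L v
    · obtain ⟨x, y, h1, h2, h3, h4⟩ := ih hv hw
      exact ⟨x, y, h1, h2, h3, List.mem_cons_of_mem _ h4⟩
    · exact ⟨u, v, h, hu, hv, by simp⟩

/-- The 3-CNF formula `C` is satisfiable iff there is a spanning tree `T`
of `H_m` such that for every pair of contradictory occurrences, at most one of the two
corresponding literal edges belongs to `T`. -/
theorem threeSat_iff_spanningTree (n m : ℕ) (C : Fin m → Fin 3 → Fin n × Bool) :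
    (∃ a : Fin n → Bool, ∀ i : Fin m, ∃ j : Fin 3, a (C i j).1 = (C i j).2) ↔
    (∃ T : SimpleGraph (Vpath m), T ≤ Hm m ∧ T.Connected ∧ T.IsAcyclic ∧
      ∀ (i i' : Fin m) (j j' : Fin 3),
        ((i, j) : Fin m × Fin 3) ≠ (i', j') →
        (C i j).1 = (C i' j').1 → (C i j).2 ≠ (C i' j').2 →
        ¬(s(Sum.inl i.castSucc, Sum.inr (i, j)) ∈ T.edgeSet ∧
          s(Sum.inl i'.castSucc, Sum.inr (i', j')) ∈ T.edgeSet)) := by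
  classical
  constructor
  · rintro ⟨a, ha⟩
    choose f hf using ha
    set S : Set (Sym2 (Vpath m)) :=
      {e | (∃ i : Fin m, e = s(Sum.inl i.castSucc, Sum.inr (i, f i))) ∨
           (∃ i : Fin m, ∃ j : Fin 3, e = s(Sum.inr (i, j), Sum.inl i.succ))} with hSdef
    have hadj1 : ∀ i : Fin m,
        (SimpleGraph.fromEdgeSet S).Adj (Sum.inl i.castSucc) (Sum.inr (i, f i)) := by
      intro i
      rw [SimpleGraph.fromEdgeSet_adj]
      exact ⟨Or.inl ⟨i, rfl⟩, by simp⟩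
    have hadj2 : ∀ (i : Fin m) (j : Fin 3),
        (SimpleGraph.fromEdgeSet S).Adj (Sum.inr (i, j)) (Sum.inl i.succ) := by
      intro i j
      rw [SimpleGraph.fromEdgeSet_adj]
      exact ⟨Or.inr ⟨i, j, rfl⟩, by simp⟩
    refine ⟨SimpleGraph.fromEdgeSet S, ?_, ?_, ?_, ?_⟩
    · unfold Hm
      apply SimpleGraph.fromEdgeSet_mono
      rintro e (⟨i, rfl⟩ | ⟨i, j, rfl⟩)
      exacts [⟨i, f i, Or.inl rfl⟩, ⟨i, j, Or.inr rfl⟩]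
    · have hu : ∀ k : Fin (m+1),
          (SimpleGraph.fromEdgeSet S).Reachable (Sum.inl 0) (Sum.inl k) := by
        intro k
        induction k using Fin.induction with
        | zero => exact SimpleGraph.Reachable.refl _
        | succ i ih => exact ih.trans ((hadj1 i).reachable.trans (hadj2 i (f i)).reachable)
      have hall : ∀ v : Vpath m, (SimpleGraph.fromEdgeSet S).Reachable (Sum.inl 0) v := by
        rintro (k | ⟨i, j⟩)
        · exact hu k
        · exact (hu i.succ).trans (hadj2 i j).reachable.symm
      exact (SimpleGraph.connected_iff _).mpr
        ⟨fun u v => (hall u).symm.trans (hall v), ⟨Sum.inl 0⟩⟩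
    · rw [SimpleGraph.isAcyclic_iff_forall_adj_isBridge]
      intro v w hvw
      have hmem : s(v, w) ∈ S := ((SimpleGraph.fromEdgeSet_adj _).mp hvw).1
      rw [SimpleGraph.isBridge_iff_adj_and_forall_walk_mem_edges]
      refine fun p => ?_
      rcases hmem with ⟨i, he⟩ | ⟨i, j, he⟩
      · -- literal edge: cut at block i
        set L : Vpath m → Prop :=
          Sum.elim (fun k => (k : ℕ) ≤ (i : ℕ)) (fun q => (q.1 : ℕ) < (i : ℕ)) with hL
        have hclass : ∀ x y : Vpath m, s(x, y) ∈ S → L x → ¬ L y →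
            s(x, y) = s(Sum.inl i.castSucc, Sum.inr (i, f i)) := by
          rintro x y (⟨i₀, he₀⟩ | ⟨i₀, j₀, he₀⟩) hx hy <;>
            rw [Sym2.eq_iff] at he₀ <;>
            rcases he₀ with ⟨rfl, rfl⟩ | ⟨rfl, rfl⟩ <;>
            simp only [hL, Sum.elim_inl, Sum.elim_inr, Fin.coe_castSucc, Fin.val_succ] at hx hy
          · have : (i₀ : ℕ) = (i : ℕ) := by omega
            have : i₀ = i := Fin.val_injective this
            subst this; rfl
          · exact absurd hx (by omega)
          · exact absurd hx (by omega)
          · exact absurd hx (by omega)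
        rw [Sym2.eq_iff] at he
        rcases he with ⟨rfl, rfl⟩ | ⟨rfl, rfl⟩
        · obtain ⟨x, y, hxy, hx, hy, hmem'⟩ := walk_cross (L := L) p
            (by simp [hL]) (by simp [hL])
          have := hclass x y ((SimpleGraph.fromEdgeSet_adj _).mp hxy).1 hx hy
          rwa [← this]
        · obtain ⟨x, y, hxy, hx, hy, hmem'⟩ := walk_cross (L := fun v => ¬ L v) p
            (by simp [hL]) (by simp [hL])
          have := hclass y x ((SimpleGraph.fromEdgeSet_adj _).mp hxy.symm).1
            (not_not.mp hy) hx
          rw [Sym2.eq_swap] at this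
          rw [Sym2.eq_swap, ← this]
          exact hmem'
      · -- dummy edge w_{i,j} — u_{i+1}
        set L : Vpath m → Prop :=
          Sum.elim (fun k => (k : ℕ) ≤ (i : ℕ) ∧ j = f i)
            (fun q => ((q.1 : ℕ) < (i : ℕ) ∧ j = f i) ∨ (q.1 = i ∧ q.2 = j)) with hL
        have hclass : ∀ x y : Vpath m, s(x, y) ∈ S → L x → ¬ L y →
            s(x, y) = s(Sum.inr (i, j), Sum.inl i.succ) := by
          rintro x y (⟨i₀, he₀⟩ | ⟨i₀, j₀, he₀⟩) hx hy <;>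
            rw [Sym2.eq_iff] at he₀ <;>
            rcases he₀ with ⟨rfl, rfl⟩ | ⟨rfl, rfl⟩ <;>
            simp only [hL, Sum.elim_inl, Sum.elim_inr, Fin.coe_castSucc, Fin.val_succ] at hx hy
          · exfalso
            obtain ⟨h1, h2⟩ := hx
            rcases lt_or_eq_of_le h1 with h | h
            · exact hy (Or.inl ⟨h, h2⟩)
            · have : i₀ = i := Fin.val_injective h
              subst this
              exact hy (Or.inr ⟨rfl, h2.symm⟩)
          · exfalso
            rcases hx with ⟨h1, h2⟩ | ⟨h1, h2⟩
            · exact hy ⟨le_of_lt h1, h2⟩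
            · subst h1
              exact hy ⟨le_refl _, h2.symm⟩
          · rcases hx with ⟨h1, h2⟩ | ⟨h1, h2⟩
            · exact absurd (hy ⟨by omega, h2⟩) (fun h => h)
            · subst h1; subst h2; rfl
          · exfalso
            obtain ⟨h1, h2⟩ := hx
            exact hy (Or.inl ⟨by omega, h2⟩)
        rw [Sym2.eq_iff] at he
        rcases he with ⟨rfl, rfl⟩ | ⟨rfl, rfl⟩
        · have hvL : L (Sum.inr (i, j)) := Or.inr ⟨rfl, rfl⟩
          have hwL : ¬ L (Sum.inl i.succ) := by
            rintro ⟨h, -⟩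
            simp only [Fin.val_succ] at h
            omega
          obtain ⟨x, y, hxy, hx, hy, hmem'⟩ := walk_cross (L := L) p hvL hwL
          have := hclass x y ((SimpleGraph.fromEdgeSet_adj _).mp hxy).1 hx hy
          rwa [← this]
        · have hvL : ¬ L (Sum.inl i.succ) := by
            rintro ⟨h, -⟩
            simp only [Fin.val_succ] at h
            omega
          have hwL : ¬ ¬ L (Sum.inr (i, j)) := not_not.mpr (Or.inr ⟨rfl, rfl⟩)
          obtain ⟨x, y, hxy, hx, hy, hmem'⟩ := walk_cross (L := fun v => ¬ L v) p hvL hwL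
          have := hclass y x ((SimpleGraph.fromEdgeSet_adj _).mp hxy.symm).1
            (not_not.mp hy) hx
          rw [Sym2.eq_swap] at this
          rw [Sym2.eq_swap, ← this]
          exact hmem'
    · rintro i i' j j' hne hvar hbool ⟨h1, h2⟩
      rw [SimpleGraph.edgeSet_fromEdgeSet] at h1 h2
      have getj : ∀ (i₁ : Fin m) (j₁ : Fin 3),
          s(Sum.inl i₁.castSucc, Sum.inr (i₁, j₁)) ∈ S → j₁ = f i₁ := by
        intro i₁ j₁ hmem
        rcases hmem with ⟨i₀, he⟩ | ⟨i₀, j₀, he⟩ <;> rw [Sym2.eq_iff] at he <;>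
          rcases he with ⟨he1, he2⟩ | ⟨he1, he2⟩
        · rw [Sum.inr.injEq, Prod.mk.injEq] at he2
          obtain ⟨h3, h4⟩ := he2
          subst h3; exact h4
        · exact absurd he1 (by simp)
        · exact absurd he1 (by simp)
        · rw [Sum.inl.injEq] at he1
          rw [Sum.inr.injEq, Prod.mk.injEq] at he2
          obtain ⟨h3, h4⟩ := he2
          subst h3
          have := congrArg Fin.val he1
          simp only [Fin.coe_castSucc, Fin.val_succ] at this
          omega
      have hj : j = f i := getj i j h1.1
      have hj' : j' = f i' := getj i' j' h2.1
      apply hbool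
      have e1 : a (C i j).1 = (C i j).2 := by rw [hj]; exact hf i
      have e2 : a (C i' j').1 = (C i' j').2 := by rw [hj']; exact hf i'
      rw [← e1, ← e2, hvar]
  · rintro ⟨T, hle, hconn, hacyc, hcond⟩
    have key : ∀ i : Fin m, ∃ j : Fin 3,
        s(Sum.inl i.castSucc, Sum.inr (i, j)) ∈ T.edgeSet := by
      intro i
      obtain ⟨p⟩ := hconn (Sum.inl i.castSucc) (Sum.inl i.succ)
      obtain ⟨x, y, hxy, hx, hy, -⟩ := walk_cross
        (L := Sum.elim (fun k : Fin (m+1) => (k : ℕ) ≤ (i : ℕ))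
          (fun q : Fin m × Fin 3 => (q.1 : ℕ) < (i : ℕ))) p
        (by show ((i.castSucc : Fin (m+1)) : ℕ) ≤ (i : ℕ); simp)
        (by show ¬ ((i.succ : Fin (m+1)) : ℕ) ≤ (i : ℕ); simp [Fin.val_succ])
      have hT : s(x, y) ∈ T.edgeSet := hxy
      have hHm := hle hxy
      rw [Hm, SimpleGraph.fromEdgeSet_adj] at hHm
      obtain ⟨⟨i₀, j₀, he⟩, -⟩ := hHm
      rcases he with he | he <;> rw [Sym2.eq_iff] at he <;>
        rcases he with ⟨rfl, rfl⟩ | ⟨rfl, rfl⟩ <;>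
        simp only [Sum.elim_inl, Sum.elim_inr, Fin.coe_castSucc, Fin.val_succ] at hx hy
      · have : (i₀ : ℕ) = (i : ℕ) := by omega
        have : i₀ = i := Fin.val_injective this
        subst this
        exact ⟨j₀, hT⟩
      · exact absurd hx (by omega)
      · exact absurd hx (by omega)
      · exact absurd hx (by omega)
    refine ⟨fun v => if (∃ o : Fin m × Fin 3, (C o.1 o.2).1 = v ∧ (C o.1 o.2).2 = true ∧
        s(Sum.inl o.1.castSucc, Sum.inr o) ∈ T.edgeSet) then true else false, ?_⟩
    intro i
    obtain ⟨j, hj⟩ := key i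
    refine ⟨j, ?_⟩
    show (if (∃ o : Fin m × Fin 3, (C o.1 o.2).1 = (C i j).1 ∧ (C o.1 o.2).2 = true ∧
        s(Sum.inl o.1.castSucc, Sum.inr o) ∈ T.edgeSet) then true else false) = (C i j).2
    rcases hb : (C i j).2 with _ | _
    · have hno : ¬ (∃ o : Fin m × Fin 3, (C o.1 o.2).1 = (C i j).1 ∧ (C o.1 o.2).2 = true ∧
          s(Sum.inl o.1.castSucc, Sum.inr o) ∈ T.edgeSet) := by
        rintro ⟨⟨i', j'⟩, hv, hb', he'⟩
        have hne : ((i, j) : Fin m × Fin 3) ≠ (i', j') := by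
          rintro h
          rw [Prod.mk.injEq] at h
          obtain ⟨rfl, rfl⟩ := h
          rw [hb] at hb'
          exact Bool.false_ne_true hb'
        exact hcond i i' j j' hne hv.symm
          (by rw [hb, hb']; exact Bool.false_ne_true) ⟨hj, he'⟩
      rw [if_neg hno]
    · rw [if_pos ⟨(i, j), rfl, hb, hj⟩]
end

section
/- The 3-CNF formula C is satisfiable if and only if there exists a set D of edges of G_m such that s and t are not connected in the graph obtained from G_m by deleting the edges in D, and for every pair of contradictory occurrences o and o', at most one of the two edges corresponding to o and o' belongs to D. (Equivalently: the minmax s-t cut value of the constructed instance is at most 1 if C is satisfiable and at least 2 otherwise.) -/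
/-- The edge of `G_m` corresponding to the occurrence `(i, j)`:
`j = 0`: `s — (i,0)`; `j = 1`: `(i,0) — (i,1)`; `j = 2`: `(i,1) — t`. -/
def occEdge {m : ℕ} (o : Fin m × Fin 3) : Sym2 (Vcut m) :=
  if o.2 = 0 then s(Sum.inr false, Sum.inl (o.1, 0))
  else if o.2 = 1 then s(Sum.inl (o.1, 0), Sum.inl (o.1, 1))
  else s(Sum.inl (o.1, 1), Sum.inr true)

lemma occEdge_inj {m : ℕ} {o o' : Fin m × Fin 3} (h : occEdge o = occEdge o') : o = o' := by
  obtain ⟨i, j⟩ := o; obtain ⟨i', j'⟩ := o'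
  fin_cases j <;> fin_cases j' <;>
    simp_all [occEdge, Sym2.eq_iff, Prod.ext_iff]

def cutF {m : ℕ} (j : Fin m → Fin 3) : Vcut m → Bool
  | Sum.inr b => b
  | Sum.inl (i, k) => if k = 0 then decide (j i = 0) else !decide (j i = 2)

lemma cut_disconnects {m : ℕ} (j : Fin m → Fin 3) :
    ¬ ((Gm m).deleteEdges {e | ∃ i, e = occEdge (i, j i)}).Reachable
      (Sum.inr false) (Sum.inr true) := by
  set G' := (Gm m).deleteEdges {e | ∃ i, e = occEdge (i, j i)} with hG'
  have key : ∀ u v : Vcut m, G'.Adj u v → cutF j u = cutF j v := by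
    intro u v huv
    rw [hG', SimpleGraph.deleteEdges_adj] at huv
    obtain ⟨hadj, hD⟩ := huv
    rw [Gm, SimpleGraph.fromEdgeSet_adj] at hadj
    obtain ⟨⟨i, hi⟩, hne⟩ := hadj
    have h3 : j i = 0 ∨ j i = 1 ∨ j i = 2 := by omega
    rcases hi with hi | hi | hi
    · have hji : j i ≠ 0 := fun h => hD ⟨i, by rw [hi]; simp [occEdge, h]⟩
      rw [Sym2.eq_iff] at hi
      rcases hi with ⟨hu, hv⟩ | ⟨hu, hv⟩ <;> subst hu <;> subst hv <;> simp [cutF, hji]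
    · have hji : j i ≠ 1 := fun h => hD ⟨i, by rw [hi]; simp [occEdge, h]⟩
      rw [Sym2.eq_iff] at hi
      rcases hi with ⟨hu, hv⟩ | ⟨hu, hv⟩ <;> subst hu <;> subst hv <;>
        rcases h3 with h | h | h <;> simp_all [cutF]
    · have hji : j i ≠ 2 := fun h => hD ⟨i, by rw [hi]; simp [occEdge, h]⟩
      rw [Sym2.eq_iff] at hi
      rcases hi with ⟨hu, hv⟩ | ⟨hu, hv⟩ <;> subst hu <;> subst hv <;> simp [cutF, hji]
  have hwalk : ∀ {u v : Vcut m}, G'.Walk u v → cutF j u = cutF j v := by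
    intro u v w
    induction w with
    | nil => rfl
    | cons h p ih => exact (key _ _ h).trans ih
  intro hr
  obtain ⟨w⟩ := hr
  simpa [cutF] using hwalk w

/-- The 3-CNF formula `C` is satisfiable iff there is a set `D` of edges of
`G_m` whose deletion disconnects `s` from `t` and such that for every pair of
contradictory occurrences, at most one of the two corresponding edges belongs to `D`. -/
theorem threeSat_iff_cut (n m : ℕ) (C : Fin m → Fin 3 → Fin n × Bool) :
    (∃ a : Fin n → Bool, ∀ i : Fin m, ∃ j : Fin 3, a (C i j).1 = (C i j).2) ↔
    (∃ D : Set (Sym2 (Vcut m)),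
      (¬ ((Gm m).deleteEdges D).Reachable (Sum.inr false) (Sum.inr true)) ∧
      ∀ o o' : Fin m × Fin 3, o ≠ o' →
        (C o.1 o.2).1 = (C o'.1 o'.2).1 → (C o.1 o.2).2 ≠ (C o'.1 o'.2).2 →
        ¬(occEdge o ∈ D ∧ occEdge o' ∈ D)) := by
  classical
  constructor
  · rintro ⟨a, ha⟩
    choose j hj using ha
    refine ⟨{e | ∃ i, e = occEdge (i, j i)}, cut_disconnects j, ?_⟩
    rintro o o' hne hvar hsgn ⟨⟨i, hi⟩, ⟨i', hi'⟩⟩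
    obtain rfl := occEdge_inj hi
    obtain rfl := occEdge_inj hi'
    have h1 := hj i
    have h2 := hj i'
    rw [show (C (i, j i).1 (i, j i).2) = C i (j i) from rfl,
      show (C (i', j i').1 (i', j i').2) = C i' (j i') from rfl] at hvar hsgn
    rw [hvar] at h1
    exact hsgn (h1.symm.trans h2)
  · rintro ⟨D, hdis, hcon⟩
    have hexj : ∀ i : Fin m, ∃ jj : Fin 3, occEdge (i, jj) ∈ D := by
      intro i
      by_contra h
      push_neg at h
      apply hdis
      have a1 : ((Gm m).deleteEdges D).Adj (Sum.inr false) (Sum.inl (i, 0)) := by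
        refine ⟨⟨⟨i, Or.inl rfl⟩, by simp⟩, fun hD => h 0 ?_⟩
        simpa [occEdge] using hD
      have a2 : ((Gm m).deleteEdges D).Adj (Sum.inl (i, 0)) (Sum.inl (i, 1)) := by
        refine ⟨⟨⟨i, Or.inr (Or.inl rfl)⟩, by simp⟩, fun hD => h 1 ?_⟩
        simpa [occEdge] using hD
      have a3 : ((Gm m).deleteEdges D).Adj (Sum.inl (i, 1)) (Sum.inr true) := by
        refine ⟨⟨⟨i, Or.inr (Or.inr rfl)⟩, by simp⟩, fun hD => h 2 ?_⟩
        simpa [occEdge] using hD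
      exact (a1.reachable.trans a2.reachable).trans a3.reachable
    choose j hjD using hexj
    refine ⟨fun v => if ∃ i, (C i (j i)).1 = v ∧ (C i (j i)).2 = true then true else false,
      fun i => ⟨j i, ?_⟩⟩
    by_cases hb : (C i (j i)).2 = true
    · beta_reduce
      rw [hb, if_pos ⟨i, rfl, hb⟩]
    · have hb0 : (C i (j i)).2 = false := by simpa using hb
      beta_reduce
      rw [hb0, if_neg]
      rintro ⟨i', hv, hb'⟩
      have hne : (i, j i) ≠ (i', j i') := by
        intro h
        obtain ⟨h1, h2⟩ := Prod.ext_iff.mp h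
        subst h1
        exact Bool.false_ne_true (hb0.symm.trans hb')
      exact hcon (i, j i) (i', j i') hne hv.symm (by rw [hb0, hb']; exact Bool.false_ne_true)
        ⟨hjD i, hjD i'⟩
end

section
/- The 3-CNF formula C is satisfiable if and only if there exists a simple path from u_0 to u_m in H_m such that for every pair of contradictory occurrences o and o', at most one of the two literal edges corresponding to o and o' lies on the path. (Equivalently: the minmax shortest path value of the constructed instance is at most 1 if C is satisfiable and at least 2 otherwise.) -/
namespace ThreeSatAux

/-- Level of a vertex: `u_k` has level `2k`, `w_{i,j}` has level `2i+1`. -/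
def lvl {m : ℕ} : Vpath m → ℕ := Sum.elim (fun k => 2 * k.val) (fun p => 2 * p.1.val + 1)

lemma hm_adj {m : ℕ} {x y : Vpath m} (h : (Hm m).Adj x y) :
    ∃ i : Fin m, ∃ j : Fin 3,
      (x = Sum.inl i.castSucc ∧ y = Sum.inr (i, j)) ∨
      (x = Sum.inr (i, j) ∧ y = Sum.inl i.castSucc) ∨
      (x = Sum.inr (i, j) ∧ y = Sum.inl i.succ) ∨
      (x = Sum.inl i.succ ∧ y = Sum.inr (i, j)) := by
  rw [Hm, SimpleGraph.fromEdgeSet_adj] at h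
  obtain ⟨⟨i, j, h1 | h1⟩, _⟩ := h
  · rw [Sym2.eq_iff] at h1
    exact ⟨i, j, by tauto⟩
  · rw [Sym2.eq_iff] at h1
    exact ⟨i, j, by tauto⟩

/-- Any walk crossing level `2i` to `2i+1` uses a literal edge at clause `i`. -/
lemma cross {m : ℕ} {x y : Vpath m} (p : (Hm m).Walk x y) (i : Fin m)
    (hx : lvl x ≤ 2 * i.val) (hy : 2 * i.val + 1 ≤ lvl y) :
    ∃ j, s(Sum.inl i.castSucc, Sum.inr (i, j)) ∈ p.edges := by
  induction p with
  | nil => omega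
  | @cons a b c h q ih =>
    by_cases hb : lvl b ≤ 2 * i.val
    · obtain ⟨j, hj⟩ := ih hb hy
      exact ⟨j, by simp [hj]⟩
    · push_neg at hb
      obtain ⟨i', j, hc⟩ := hm_adj h
      rcases hc with ⟨ha', hb'⟩ | ⟨ha', hb'⟩ | ⟨ha', hb'⟩ | ⟨ha', hb'⟩ <;>
        subst ha' <;> subst hb' <;>
        simp only [lvl, Sum.elim_inl, Sum.elim_inr, Fin.coe_castSucc, Fin.val_succ] at hx hb
      · have : i' = i := by
          apply Fin.ext; omega
        subst this
        exact ⟨j, by simp⟩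
      · omega
      · omega
      · omega

lemma build {m : ℕ} (js : Fin m → Fin 3) :
    ∀ d k (hk : k + d = m),
    ∃ p : (Hm m).Walk (Sum.inl ⟨k, by omega⟩) (Sum.inl (Fin.last m)),
      p.IsPath ∧
      (∀ v ∈ p.support, 2 * k ≤ lvl v) ∧
      (∀ e ∈ p.edges, ∃ i : Fin m,
        e = s(Sum.inl i.castSucc, Sum.inr (i, js i)) ∨
        e = s(Sum.inr (i, js i), Sum.inl i.succ)) := by
  intro d
  induction d with
  | zero =>
    intro k hk
    have hkm : k = m := by omega
    subst hkm
    have hv : (Sum.inl (Fin.last k) : Vpath k) = Sum.inl ⟨k, by omega⟩ := by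
      simp [Fin.last]
    refine ⟨SimpleGraph.Walk.nil.copy hv rfl, by simp, ?_, by simp⟩
    intro v hv'
    rw [SimpleGraph.Walk.support_copy] at hv'
    simp only [SimpleGraph.Walk.support_nil, List.mem_singleton] at hv'
    subst hv'
    simp [lvl]
  | succ d ih =>
    intro k hk
    have hkm : k < m := by omega
    obtain ⟨p', hpath, hsupp, hedge⟩ := ih (k + 1) (by omega)
    set i : Fin m := ⟨k, hkm⟩ with hi
    have adj1 : (Hm m).Adj (Sum.inl i.castSucc) (Sum.inr (i, js i)) := by
      rw [Hm, SimpleGraph.fromEdgeSet_adj]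
      exact ⟨⟨i, js i, Or.inl rfl⟩, by simp⟩
    have adj2 : (Hm m).Adj (Sum.inr (i, js i)) (Sum.inl i.succ) := by
      rw [Hm, SimpleGraph.fromEdgeSet_adj]
      exact ⟨⟨i, js i, Or.inr rfl⟩, by simp⟩
    have hcs : (Sum.inl i.castSucc : Vpath m) = Sum.inl ⟨k, by omega⟩ := by
      simp [Fin.castSucc, Fin.castAdd, Fin.castLE, hi]
    have hsc : (Sum.inl i.succ : Vpath m) = Sum.inl ⟨k + 1, by omega⟩ := by
      simp [Fin.succ, hi]
    refine ⟨((SimpleGraph.Walk.cons adj1 (SimpleGraph.Walk.cons adj2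
      (p'.copy hsc.symm rfl))).copy hcs rfl), ?_, ?_, ?_⟩
    · simp only [SimpleGraph.Walk.isPath_copy]
      rw [SimpleGraph.Walk.cons_isPath_iff, SimpleGraph.Walk.cons_isPath_iff]
      refine ⟨⟨by simpa using hpath, ?_⟩, ?_⟩
      · intro hmem
        rw [SimpleGraph.Walk.support_copy] at hmem
        have := hsupp _ hmem
        simp only [lvl, Sum.elim_inr, hi] at this
        omega
      · intro hmem
        rw [SimpleGraph.Walk.support_cons] at hmem
        rcases List.mem_cons.mp hmem with h' | h'
        · exact absurd h' (by simp)
        · rw [SimpleGraph.Walk.support_copy] at h'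
          have := hsupp _ h'
          simp only [lvl, Sum.elim_inl, Fin.coe_castSucc, hi] at this
          omega
    · intro v hv
      rw [SimpleGraph.Walk.support_copy, SimpleGraph.Walk.support_cons,
        SimpleGraph.Walk.support_cons, SimpleGraph.Walk.support_copy] at hv
      rcases List.mem_cons.mp hv with h' | h'
      · subst h'; simp [lvl, hi]
      · rcases List.mem_cons.mp h' with h'' | h''
        · subst h''; simp [lvl, hi]
        · have := hsupp _ h''; omega
    · intro e he
      rw [SimpleGraph.Walk.edges_copy, SimpleGraph.Walk.edges_cons,
        SimpleGraph.Walk.edges_cons, SimpleGraph.Walk.edges_copy] at he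
      rcases List.mem_cons.mp he with h' | h'
      · exact ⟨i, Or.inl h'⟩
      · rcases List.mem_cons.mp h' with h'' | h''
        · exact ⟨i, Or.inr h''⟩
        · exact hedge _ h''

/-- Injectivity of literal edges among the constructed edges. -/
lemma edge_eq {m : ℕ} {i i' : Fin m} {j j' : Fin 3}
    (h : s(Sum.inl i.castSucc, Sum.inr (i, j)) = s(Sum.inl i'.castSucc, Sum.inr (i', j')) ∨
      s(Sum.inl i.castSucc, Sum.inr (i, j)) = s(Sum.inr (i', j'), Sum.inl i'.succ)) :
    i = i' ∧ j = j' := by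
  rcases h with h | h <;>
    simp only [Sym2.eq_iff, Sum.inl.injEq, Sum.inr.injEq, Prod.mk.injEq,
      reduceCtorEq, false_and, and_false, or_false, false_or] at h
  · exact ⟨h.2.1, h.2.2⟩
  · obtain ⟨h1, rfl, rfl⟩ := h
    have := congrArg Fin.val h1
    simp only [Fin.coe_castSucc, Fin.val_succ] at this
    omega

end ThreeSatAux

open ThreeSatAux in
/-- The 3-CNF formula `C` is satisfiable iff there is a simple path from
`u_0` to `u_m` in `H_m` such that for every pair of contradictory occurrences, at most
one of the two corresponding literal edges lies on the path. -/
theorem threeSat_iff_path (n m : ℕ) (C : Fin m → Fin 3 → Fin n × Bool) :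
    (∃ a : Fin n → Bool, ∀ i : Fin m, ∃ j : Fin 3, a (C i j).1 = (C i j).2) ↔
    (∃ p : (Hm m).Walk (Sum.inl 0) (Sum.inl (Fin.last m)), p.IsPath ∧
      ∀ (i i' : Fin m) (j j' : Fin 3),
        ((i, j) : Fin m × Fin 3) ≠ (i', j') →
        (C i j).1 = (C i' j').1 → (C i j).2 ≠ (C i' j').2 →
        ¬(s(Sum.inl i.castSucc, Sum.inr (i, j)) ∈ p.edges ∧
          s(Sum.inl i'.castSucc, Sum.inr (i', j')) ∈ p.edges)) := by
  constructor
  · rintro ⟨a, ha⟩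
    choose js hjs using ha
    obtain ⟨p, hpath, _, hedge⟩ := build js m 0 (by omega)
    have h0 : (Sum.inl (⟨0, by omega⟩ : Fin (m + 1)) : Vpath m) = Sum.inl 0 := by
      simp [Fin.ext_iff]
    refine ⟨p.copy h0 rfl, by rw [SimpleGraph.Walk.isPath_copy]; exact hpath, ?_⟩
    rintro i i' j j' hne hvar hsign ⟨h1, h2⟩
    rw [SimpleGraph.Walk.edges_copy] at h1 h2
    obtain ⟨i₀, hi₀⟩ := hedge _ h1
    obtain ⟨hii, hjj⟩ := edge_eq hi₀
    obtain ⟨i₁, hi₁⟩ := hedge _ h2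
    obtain ⟨hii', hjj'⟩ := edge_eq hi₁
    subst hii; subst hjj; subst hii'; subst hjj'
    have e1 := hjs i
    have e2 := hjs i'
    rw [hvar] at e1
    exact hsign (e1.symm.trans e2)
  · rintro ⟨p, hpath, hcond⟩
    have hjs : ∀ i : Fin m, ∃ j, s(Sum.inl i.castSucc, Sum.inr (i, j)) ∈ p.edges := by
      intro i
      have hlt := i.isLt
      exact cross p i (by simp [lvl])
        (by simp only [lvl, Sum.elim_inl, Fin.val_last]; omega)
    choose js hjsmem using hjs
    refine ⟨fun v => if h : ∃ i : Fin m, (C i (js i)).1 = v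
      then (C h.choose (js h.choose)).2 else true, fun i => ⟨js i, ?_⟩⟩
    beta_reduce
    have h : ∃ i' : Fin m, (C i' (js i')).1 = (C i (js i)).1 := ⟨i, rfl⟩
    rw [dif_pos h]
    by_contra hne2
    have hspec := h.choose_spec
    by_cases heq : (h.choose, js h.choose) = ((i, js i) : Fin m × Fin 3)
    · rw [Prod.mk.injEq] at heq
      rw [heq.1] at hne2
      exact hne2 rfl
    · exact hcond h.choose i (js h.choose) (js i) heq hspec hne2 ⟨hjsmem _, hjsmem _⟩
end

section
/- Assume there exists at least one contradictory pair of occurrences of the 3-CNF formula C. Then for every contradictory pair p of occurrences, the minimum over all selections σ of cost(σ, p) equals 0, and consequently the minimum over all selections σ of the maximum over all contradictory pairs p of the regret cost(σ, p) − min_{σ'} cost(σ', p) equals the minimum over all selections σ of the maximum over all contradictory pairs p of cost(σ, p); i.e., in the constructed instance the optimal minmax regret value coincides with the optimal minmax value. -/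
/-- The cost of a selection `σ` under the scenario given by the (contradictory) pair of
occurrences `p = (o, o')`: one unit for each of the two occurrences that belongs to the
occurrence set `X_σ = {(i, σ i) | i}`. -/
def pairCost {m : ℕ} (σ : Fin m → Fin 3) (p : (Fin m × Fin 3) × (Fin m × Fin 3)) : ℕ :=
  (if σ p.1.1 = p.1.2 then 1 else 0) + (if σ p.2.1 = p.2.2 then 1 else 0)

/-- If the 3-CNF formula `C` has at least one contradictory pair of
occurrences, then for every contradictory pair `p` the minimum over selections of
`cost(σ, p)` is 0, and hence the optimal minmax regret value equals the optimal minmax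
value of the constructed instance. -/
theorem minmaxRegret_eq_minmax_selection (n m : ℕ) (C : Fin m → Fin 3 → Fin n × Bool)
    (hP : (Finset.univ.filter
        (fun p : (Fin m × Fin 3) × (Fin m × Fin 3) =>
          p.1 ≠ p.2 ∧ (C p.1.1 p.1.2).1 = (C p.2.1 p.2.2).1 ∧
            (C p.1.1 p.1.2).2 ≠ (C p.2.1 p.2.2).2)).Nonempty) :
    (∀ p ∈ Finset.univ.filter
        (fun p : (Fin m × Fin 3) × (Fin m × Fin 3) =>
          p.1 ≠ p.2 ∧ (C p.1.1 p.1.2).1 = (C p.2.1 p.2.2).1 ∧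
            (C p.1.1 p.1.2).2 ≠ (C p.2.1 p.2.2).2),
      (Finset.univ.inf' Finset.univ_nonempty
        (fun σ : Fin m → Fin 3 => pairCost σ p)) = 0) ∧
    (Finset.univ.inf' Finset.univ_nonempty (fun σ : Fin m → Fin 3 =>
        (Finset.univ.filter
          (fun p : (Fin m × Fin 3) × (Fin m × Fin 3) =>
            p.1 ≠ p.2 ∧ (C p.1.1 p.1.2).1 = (C p.2.1 p.2.2).1 ∧
              (C p.1.1 p.1.2).2 ≠ (C p.2.1 p.2.2).2)).sup' hP
          (fun p => pairCost σ p -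
            Finset.univ.inf' Finset.univ_nonempty
              (fun σ' : Fin m → Fin 3 => pairCost σ' p)))) =
      Finset.univ.inf' Finset.univ_nonempty (fun σ : Fin m → Fin 3 =>
        (Finset.univ.filter
          (fun p : (Fin m × Fin 3) × (Fin m × Fin 3) =>
            p.1 ≠ p.2 ∧ (C p.1.1 p.1.2).1 = (C p.2.1 p.2.2).1 ∧
              (C p.1.1 p.1.2).2 ≠ (C p.2.1 p.2.2).2)).sup' hP
          (fun p => pairCost σ p)) := by
  have key : ∀ p ∈ Finset.univ.filter
      (fun p : (Fin m × Fin 3) × (Fin m × Fin 3) =>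
        p.1 ≠ p.2 ∧ (C p.1.1 p.1.2).1 = (C p.2.1 p.2.2).1 ∧
          (C p.1.1 p.1.2).2 ≠ (C p.2.1 p.2.2).2),
      (Finset.univ.inf' Finset.univ_nonempty
        (fun σ : Fin m → Fin 3 => pairCost σ p)) = 0 := by
    intro p _
    obtain ⟨x, hx1, hx2⟩ : ∃ x : Fin 3, x ≠ p.1.2 ∧ x ≠ p.2.2 := by
      have h : ∀ a b : Fin 3, ∃ x, x ≠ a ∧ x ≠ b := by decide
      exact h _ _
    have h0 : pairCost (fun _ => x) p = 0 := by simp [pairCost, hx1, hx2]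
    exact Nat.eq_zero_of_le_zero (h0 ▸ Finset.inf'_le _ (Finset.mem_univ _))
  refine ⟨key, ?_⟩
  apply Finset.inf'_congr _ rfl
  intro σ _
  apply Finset.sup'_congr _ rfl
  intro p hp
  rw [key p hp, Nat.sub_zero]
end
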